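/- (Stability ⟹ Convergence, Section 4): Given a well posed nonlinear semigroup E on a real normed vector space X and a numerical method C that is consistent with E and stable, the numerical method is convergent to the nonlinear semigroup. -/

import Mathlib

open Set

variable (X : Type*) [NormedAddCommGroup X] [NormedSpace ℝ X]

/-- The set `Z = ⋃_{t ≥ 0} {t} × X_t ⊆ [0,∞) × X`. -/
def ZSet (Xt : ℝ → Set X) : Set (ℝ × X) :=
  {p : ℝ × X | 0 ≤ p.1 ∧ p.2 ∈ Xt p.1}

/-- A nonlinear semigroup on `X`: a family of subsets `Xt t ⊆ X` with
`X_{t+s} ⊆ X_t`, together with maps `E t : X → X` with `E 0 = id` on `X_0`,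
`E t` mapping `X_{t+s}` into `X_s`, and the semigroup law. -/
structure IsNonlinearSemigroup (Xt : ℝ → Set X) (E : ℝ → X → X) : Prop where
  nested : ∀ t s : ℝ, 0 ≤ t → 0 ≤ s → Xt (t + s) ⊆ Xt t
  id_zero : ∀ u ∈ Xt 0, E 0 u = u
  maps : ∀ t s : ℝ, 0 ≤ t → 0 ≤ s → ∀ u ∈ Xt (t + s), E t u ∈ Xt s
  comp : ∀ t s : ℝ, 0 ≤ t → 0 ≤ s → ∀ u ∈ Xt (t + s), E (t + s) u = E s (E t u)

/-- Well posedness: `(t,u) ↦ E t u` is continuous on `Z`. -/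
def WellPosed (Xt : ℝ → Set X) (E : ℝ → X → X) : Prop :=
  ContinuousOn (fun p : ℝ × X => E p.1 p.2) (ZSet X Xt)

/-- A numerical method: a continuous map `C : [0,∞) × X → X` with `C 0 = id`. -/
structure IsNumericalMethod (C : ℝ → X → X) : Prop where
  cont : ContinuousOn (fun p : ℝ × X => C p.1 p.2) {p : ℝ × X | 0 ≤ p.1}
  id_zero : ∀ u : X, C 0 u = u

/-- A regular subset `Z' ⊆ Z`: closed, and invariant (in the appropriate sense)
under the semigroup and the numerical method.  Here `X'_t = {u | (t,u) ∈ Z'}`. -/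
def RegularSet (Xt : ℝ → Set X) (E C : ℝ → X → X) (Z' : Set (ℝ × X)) : Prop :=
  Z' ⊆ ZSet X Xt ∧ IsClosed Z' ∧
  (∀ t s : ℝ, 0 ≤ t → 0 ≤ s → ∀ u : X, (t + s, u) ∈ Z' → (s, E t u) ∈ Z') ∧
  (∀ t Δt : ℝ, 0 ≤ t → 0 ≤ Δt → ∀ u : X, (t + Δt, u) ∈ Z' → (t, C Δt u) ∈ Z')

/-- Local stability (Definition 2.3). -/
def LocallyStable (Xt : ℝ → Set X) (E C : ℝ → X → X) : Prop :=
  ∀ Z' : Set (ℝ × X), RegularSet X Xt E C Z' →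
  ∀ T : ℝ, 0 < T → ∀ K : Set X, IsCompact K →
  ∃ L' ρ' : ℝ, 0 < L' ∧ 0 < ρ' ∧
    ∀ (Δt : ℝ) (n : ℕ) (u v : X), 0 < Δt → (n : ℝ) * Δt ≤ T →
      u ∈ K → v ∈ K → ((n : ℝ) * Δt, u) ∈ Z' → ((n : ℝ) * Δt, v) ∈ Z' →
      ‖v - u‖ ≤ ρ' → ‖(C Δt)^[n] v - (C Δt)^[n] u‖ ≤ L' * ‖v - u‖

/-- Distant stability (Definition 2.4). -/
def DistantlyStable (Xt : ℝ → Set X) (E C : ℝ → X → X) : Prop :=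
  ∀ Z' : Set (ℝ × X), RegularSet X Xt E C Z' →
  ∀ T : ℝ, 0 < T → ∀ K : Set X, IsCompact K → ∀ ρ : ℝ, 0 < ρ →
  ∃ L'' : ℝ, 0 < L'' ∧
    ∀ (Δt : ℝ) (n : ℕ) (u v : X), 0 < Δt → (n : ℝ) * Δt ≤ T →
      u ∈ K → v ∈ K → ((n : ℝ) * Δt, u) ∈ Z' → ((n : ℝ) * Δt, v) ∈ Z' →
      ρ ≤ ‖v - u‖ → ‖(C Δt)^[n] v - (C Δt)^[n] u‖ ≤ L'' * ‖v - u‖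

/-- Stability (Definition 2.5). -/
def Stable (Xt : ℝ → Set X) (E C : ℝ → X → X) : Prop :=
  ∀ Z' : Set (ℝ × X), RegularSet X Xt E C Z' →
  ∀ T : ℝ, 0 < T → ∀ K : Set X, IsCompact K →
  ∃ L : ℝ, 0 < L ∧
    ∀ (Δt : ℝ) (n : ℕ) (u v : X), 0 < Δt → (n : ℝ) * Δt ≤ T →
      u ∈ K → v ∈ K → ((n : ℝ) * Δt, u) ∈ Z' → ((n : ℝ) * Δt, v) ∈ Z' →
      ‖(C Δt)^[n] v - (C Δt)^[n] u‖ ≤ L * ‖v - u‖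

/-- Convergence of the numerical method to the semigroup (Definition 3.1). -/
def Convergent (Xt : ℝ → Set X) (E C : ℝ → X → X) : Prop :=
  ∀ Z' : Set (ℝ × X), RegularSet X Xt E C Z' →
  ∀ T : ℝ, 0 < T → ∀ K : Set X, IsCompact K → ∀ ε : ℝ, 0 < ε →
  ∃ θ : ℝ, 0 < θ ∧
    ∀ (t Δt : ℝ) (n : ℕ) (u : X), t ∈ Icc (0 : ℝ) T → 0 < Δt →
      u ∈ K → (t, u) ∈ Z' → ((n : ℝ) * Δt, u) ∈ Z' →
      Δt ≤ θ → |t - (n : ℝ) * Δt| ≤ θ →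
      ‖E t u - (C Δt)^[n] u‖ ≤ ε

/-- Consistency of the numerical method with the semigroup (Definition 3.2). -/
def Consistent (Xt : ℝ → Set X) (E C : ℝ → X → X) : Prop :=
  ∀ Z' : Set (ℝ × X), RegularSet X Xt E C Z' →
  ∀ T : ℝ, 0 < T → ∀ K : Set X, IsCompact K → ∀ ε : ℝ, 0 < ε →
  ∃ δ : ℝ, 0 < δ ∧
    ∀ (t Δt : ℝ) (u : X), t ∈ Icc (0 : ℝ) T → 0 < Δt → Δt ≤ δ →
      u ∈ K → (t + Δt, u) ∈ Z' →
      ‖C Δt (E t u) - E Δt (E t u)‖ ≤ ε * Δt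

/-- Condition (4.3): the optimal distant-stability constants remain bounded as
`ρ ↓ 0`, i.e. one constant works simultaneously for all `ρ > 0`. -/
def Condition43 (Xt : ℝ → Set X) (E C : ℝ → X → X) : Prop :=
  ∀ Z' : Set (ℝ × X), RegularSet X Xt E C Z' →
  ∀ T : ℝ, 0 < T → ∀ K : Set X, IsCompact K →
  ∃ M : ℝ, 0 < M ∧
    ∀ ρ : ℝ, 0 < ρ →
    ∀ (Δt : ℝ) (n : ℕ) (u v : X), 0 < Δt → (n : ℝ) * Δt ≤ T →
      u ∈ K → v ∈ K → ((n : ℝ) * Δt, u) ∈ Z' → ((n : ℝ) * Δt, v) ∈ Z' →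
      ρ ≤ ‖v - u‖ → ‖(C Δt)^[n] v - (C Δt)^[n] u‖ ≤ M * ‖v - u‖

/-- Stability ⟹ Convergence (Section 4). -/
theorem stable_consistent_implies_convergent
    (Xt : ℝ → Set X) (E C : ℝ → X → X)
    (hE : IsNonlinearSemigroup X Xt E) (hWP : WellPosed X Xt E)
    (hC : IsNumericalMethod X C)
    (hcons : Consistent X Xt E C) (hstab : Stable X Xt E C) :
    Convergent X Xt E C := by
  intro Z' hZ' T hT K hK ε hε
  obtain ⟨hZ'sub, hZ'closed, hZ'E, hZ'C⟩ := hZ'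
  set T' : ℝ := T + 1 with hT'def
  have hT' : (0:ℝ) < T' := by positivity
  -- The enlarged regular set Z''
  set Z'' : Set (ℝ × X) :=
    {p : ℝ × X | 0 ≤ p.1 ∧ ∃ r : ℝ, 0 ≤ r ∧ r ≤ T' ∧ (p.1 + r, p.2) ∈ Z'} with hZ''def
  have hZ'subZ'' : Z' ⊆ Z'' := by
    intro p hp
    exact ⟨(hZ'sub hp).1, 0, le_refl 0, hT'.le, by simpa using hp⟩
  have hZ''closed : IsClosed Z'' := by
    apply IsSeqClosed.isClosed
    intro f p hf hfp
    have hf1 : ∀ m : ℕ, ∃ r : ℝ, 0 ≤ r ∧ r ≤ T' ∧ ((f m).1 + r, (f m).2) ∈ Z' := fun m => (hf m).2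
    choose r hr0 hrT hrZ using hf1
    have hrIcc : ∀ m, r m ∈ Icc (0:ℝ) T' := fun m => ⟨hr0 m, hrT m⟩
    obtain ⟨a, haIcc, φ, hφ, hra⟩ := isCompact_Icc.tendsto_subseq hrIcc
    have hfφ : Filter.Tendsto (f ∘ φ) Filter.atTop (nhds p) := hfp.comp hφ.tendsto_atTop
    have h1 : Filter.Tendsto (fun m => (f ∘ φ) m |>.1) Filter.atTop (nhds p.1) :=
      (continuous_fst.tendsto p).comp hfφ
    have h2 : Filter.Tendsto (fun m => (f ∘ φ) m |>.2) Filter.atTop (nhds p.2) :=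
      (continuous_snd.tendsto p).comp hfφ
    refine ⟨?_, a, haIcc.1, haIcc.2, ?_⟩
    · exact le_of_tendsto_of_tendsto' tendsto_const_nhds h1 (fun m => (hf (φ m)).1)
    · have htend : Filter.Tendsto (fun m => ((f (φ m)).1 + r (φ m), (f (φ m)).2))
          Filter.atTop (nhds (p.1 + a, p.2)) := (h1.add hra).prodMk_nhds h2
      exact hZ'closed.mem_of_tendsto htend (Filter.Eventually.of_forall fun m => hrZ (φ m))
  have hZ''reg : RegularSet X Xt E C Z'' := by
    refine ⟨?_, hZ''closed, ?_, ?_⟩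
    · rintro ⟨s, u⟩ ⟨hs, rr, hr0, hrT, hmem⟩
      exact ⟨hs, hE.nested s rr hs hr0 (hZ'sub hmem).2⟩
    · rintro t s ht hs u ⟨hts, rr, hr0, hrT, hmem⟩
      refine ⟨hs, rr, hr0, hrT, ?_⟩
      have : (t + (s + rr), u) ∈ Z' := by
        rw [show t + (s + rr) = t + s + rr by ring]; exact hmem
      exact hZ'E t (s + rr) ht (by positivity) u this
    · rintro t Δt ht hΔt u ⟨hts, rr, hr0, hrT, hmem⟩
      refine ⟨ht, rr, hr0, hrT, ?_⟩
      have : ((t + rr) + Δt, u) ∈ Z' := by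
        rw [show t + rr + Δt = t + Δt + rr by ring]; exact hmem
      exact hZ'C (t + rr) Δt (by positivity) hΔt u this
  obtain ⟨hZ''sub, _, hZ''E, hZ''C⟩ := hZ''reg
  -- Compact sets
  set Q : Set (ℝ × X) := (Icc (0:ℝ) T' ×ˢ K) ∩ Z'' with hQdef
  have hQcompact : IsCompact Q := (isCompact_Icc.prod hK).inter_right hZ''closed
  have hQsubZ : Q ⊆ ZSet X Xt := fun p hp => hZ''sub hp.2
  set K₂ : Set X := (fun p : ℝ × X => E p.1 p.2) '' Q with hK₂def
  have hK₂ : IsCompact K₂ := hQcompact.image_of_continuousOn (hWP.mono hQsubZ)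
  set K₃ : Set X := (fun p : ℝ × X => C p.1 p.2) '' (Icc (0:ℝ) 1 ×ˢ K₂) ∪ K₂ with hK₃def
  have hK₃ : IsCompact K₃ := by
    refine IsCompact.union ?_ hK₂
    exact (isCompact_Icc.prod hK₂).image_of_continuousOn
      (hC.cont.mono (fun p hp => hp.1.1))
  -- Stability constant
  obtain ⟨L, hL, hLs⟩ := hstab Z'' ⟨hZ''sub, hZ''closed, hZ''E, hZ''C⟩ T' hT' K₃ hK₃
  -- consistency tolerance
  set ε₁ : ℝ := ε / (2 * L * T') with hε₁def
  have hε₁ : 0 < ε₁ := by positivity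
  obtain ⟨δ, hδ, hconsP⟩ := hcons Z'' ⟨hZ''sub, hZ''closed, hZ''E, hZ''C⟩ T' hT' K hK ε₁ hε₁
  -- uniform continuity of E on Q
  have hUC : UniformContinuousOn (fun p : ℝ × X => E p.1 p.2) Q :=
    hQcompact.uniformContinuousOn_of_continuous (hWP.mono hQsubZ)
  rw [Metric.uniformContinuousOn_iff] at hUC
  obtain ⟨δ₂, hδ₂, hUC⟩ := hUC (ε/2) (by positivity)
  refine ⟨min (min δ (δ₂/2)) 1, by positivity, ?_⟩
  intro t Δt n u ht hΔt huK htu hnu hΔtθ htnθ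
  set θ : ℝ := min (min δ (δ₂/2)) 1 with hθdef
  have hθδ : θ ≤ δ := (min_le_left _ _).trans (min_le_left _ _)
  have hθδ₂ : θ ≤ δ₂/2 := (min_le_left _ _).trans (min_le_right _ _)
  have hθ1 : θ ≤ 1 := min_le_right _ _
  have hΔt0 : (0:ℝ) ≤ Δt := hΔt.le
  have hn0 : (0:ℝ) ≤ (n:ℝ) * Δt := by positivity
  have habs := abs_le.mp htnθ
  have hnT' : (n:ℝ) * Δt ≤ T' := by
    have : (n:ℝ) * Δt ≤ t + θ := by linarith [habs.1]
    have ht2 := ht.2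
    rw [hT'def]; linarith
  have huXt : u ∈ Xt ((n:ℝ) * Δt) := (hZ'sub hnu).2
  -- u belongs to all Z''-sections at times k*Δt, k ≤ n
  have hβ : ∀ k : ℕ, k ≤ n → (((k:ℝ)) * Δt, u) ∈ Z'' := by
    intro k hk
    have hkn : (k:ℝ) ≤ (n:ℝ) := Nat.cast_le.mpr hk
    refine ⟨by positivity, ((n:ℝ) - (k:ℝ)) * Δt,
      mul_nonneg (sub_nonneg.mpr hkn) hΔt0, ?_, ?_⟩
    · exact le_trans (mul_le_mul_of_nonneg_right (by linarith) hΔt0) hnT'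
    · have : (k:ℝ) * Δt + ((n:ℝ) - (k:ℝ)) * Δt = (n:ℝ) * Δt := by ring
      rw [this]; exact hnu
  have hkT' : ∀ k : ℕ, k ≤ n → (k:ℝ) * Δt ≤ T' := by
    intro k hk
    have hkn : (k:ℝ) ≤ (n:ℝ) := Nat.cast_le.mpr hk
    exact le_trans (mul_le_mul_of_nonneg_right hkn hΔt0) hnT'
  have hXk : ∀ k : ℕ, k ≤ n → u ∈ Xt ((k:ℝ) * Δt) := by
    intro k hk
    have hkn : (k:ℝ) ≤ (n:ℝ) := Nat.cast_le.mpr hk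
    have h1 : u ∈ Xt ((k:ℝ) * Δt + ((n:ℝ) - (k:ℝ)) * Δt) := by
      rw [show (k:ℝ) * Δt + ((n:ℝ) - (k:ℝ)) * Δt = (n:ℝ) * Δt by ring]; exact huXt
    exact hE.nested ((k:ℝ) * Δt) (((n:ℝ) - (k:ℝ)) * Δt) (by positivity) (mul_nonneg (sub_nonneg.mpr hkn) hΔt0) h1
  have hEK₂ : ∀ k : ℕ, k ≤ n → E ((k:ℝ) * Δt) u ∈ K₂ := by
    intro k hk
    exact ⟨((k:ℝ) * Δt, u), ⟨⟨⟨by positivity, hkT' k hk⟩, huK⟩, hβ k hk⟩, rfl⟩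
  -- the telescoping sequence
  set g : ℕ → X := fun k => (C Δt)^[n - k] (E ((k:ℝ) * Δt) u) with hgdef
  have hstep : ∀ k : ℕ, k < n → dist (g k) (g (k+1)) ≤ L * (ε₁ * Δt) := by
    intro k hk
    have hk1 : k + 1 ≤ n := hk
    have hkile : k ≤ n := hk.le
    set w : X := E ((k:ℝ) * Δt) u with hwdef
    set m : ℕ := n - (k + 1) with hmdef
    have hmn : ((m:ℝ)) ≤ (n:ℝ) := Nat.cast_le.mpr (Nat.sub_le _ _)
    have hcast : ((k:ℝ) + 1) = ((k+1 : ℕ) : ℝ) := by push_cast; ring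
    have hcast2 : ((k:ℝ) + 1) * Δt + (m:ℝ) * Δt = (n:ℝ) * Δt := by
      rw [hmdef]; push_cast [Nat.cast_sub hk1]; ring
    -- semigroup law
    have hcomp : E (((k:ℝ) + 1) * Δt) u = E Δt w := by
      have h1 : u ∈ Xt ((k:ℝ) * Δt + Δt) := by
        rw [show (k:ℝ) * Δt + Δt = ((k:ℝ)+1) * Δt by ring, hcast]
        exact hXk (k+1) hk1
      have := hE.comp ((k:ℝ) * Δt) Δt (by positivity) hΔt0 u h1
      rw [show ((k:ℝ)+1) * Δt = (k:ℝ) * Δt + Δt by ring]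
      exact this
    -- consistency bound
    have hconsk : ‖C Δt w - E Δt w‖ ≤ ε₁ * Δt := by
      refine hconsP ((k:ℝ) * Δt) Δt u ⟨by positivity, hkT' k hkile⟩ hΔt
        (hΔtθ.trans hθδ) huK ?_
      rw [show (k:ℝ) * Δt + Δt = ((k:ℝ)+1) * Δt by ring, hcast]
      exact hβ (k+1) hk1
    -- memberships for stability
    have hwK₂ : w ∈ K₂ := hEK₂ k hkile
    have huK₃ : C Δt w ∈ K₃ := by
      left
      exact ⟨(Δt, w), ⟨⟨hΔt0, hΔtθ.trans hθ1⟩, hwK₂⟩, rfl⟩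
    have hvK₃ : E (((k:ℝ)+1) * Δt) u ∈ K₃ := by
      right; rw [hcast]; exact hEK₂ (k+1) hk1
    have hvZ : ((m:ℝ) * Δt, E (((k:ℝ)+1) * Δt) u) ∈ Z'' := by
      refine hZ''E (((k:ℝ)+1) * Δt) ((m:ℝ) * Δt) (by positivity) (by positivity) u ?_
      rw [hcast2]; exact hZ'subZ'' hnu
    have huZ : ((m:ℝ) * Δt, C Δt w) ∈ Z'' := by
      refine hZ''C ((m:ℝ) * Δt) Δt (by positivity) hΔt0 w ?_
      have h1 : ((m:ℝ) * Δt + Δt, E ((k:ℝ) * Δt) u) ∈ Z'' := by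
        refine hZ''E ((k:ℝ) * Δt) ((m:ℝ) * Δt + Δt) (by positivity) (by positivity) u ?_
        rw [show (k:ℝ) * Δt + ((m:ℝ) * Δt + Δt) = ((k:ℝ)+1) * Δt + (m:ℝ) * Δt by ring,
          hcast2]
        exact hZ'subZ'' hnu
      exact h1
    have hmT' : (m:ℝ) * Δt ≤ T' := le_trans (mul_le_mul_of_nonneg_right hmn hΔt0) hnT'
    have hstab' := hLs Δt m (C Δt w) (E (((k:ℝ)+1) * Δt) u) hΔt hmT' huK₃ hvK₃ huZ hvZ
    have hgk : g k = (C Δt)^[m] (C Δt w) := by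
      rw [hgdef]
      simp only
      rw [show n - k = m + 1 by omega, Function.iterate_succ_apply]
    have hgk1 : g (k+1) = (C Δt)^[m] (E (((k:ℝ)+1) * Δt) u) := by
      rw [hgdef]
      simp only
      rw [show n - (k+1) = m from rfl, hcast]
    rw [hgk, hgk1, dist_eq_norm, ← norm_sub_rev]
    refine hstab'.trans ?_
    have : ‖E (((k:ℝ)+1) * Δt) u - C Δt w‖ ≤ ε₁ * Δt := by
      rw [hcomp, norm_sub_rev]; exact hconsk
    exact mul_le_mul_of_nonneg_left this hL.le
  have htel : dist (g 0) (g n) ≤ (n:ℝ) * (L * (ε₁ * Δt)) := by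
    refine (dist_le_range_sum_dist g n).trans ?_
    have := Finset.sum_le_card_nsmul (Finset.range n) (fun k => dist (g k) (g (k+1)))
      (L * (ε₁ * Δt)) (fun k hk => hstep k (Finset.mem_range.mp hk))
    rwa [Finset.card_range, nsmul_eq_mul] at this
  have hg0 : g 0 = (C Δt)^[n] u := by
    rw [hgdef]
    simp only [Nat.sub_zero, Nat.cast_zero, zero_mul]
    congr 1
    refine hE.id_zero u ?_
    have h1 : u ∈ Xt (0 + (n:ℝ) * Δt) := by rwa [zero_add]
    exact hE.nested 0 ((n:ℝ) * Δt) le_rfl hn0 h1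
  have hgn : g n = E ((n:ℝ) * Δt) u := by
    rw [hgdef]; simp
  have hhalf1 : dist ((C Δt)^[n] u) (E ((n:ℝ) * Δt) u) ≤ ε / 2 := by
    rw [← hg0, ← hgn]
    refine htel.trans ?_
    have hLε : L * ε₁ * T' = ε / 2 := by
      rw [hε₁def]; field_simp
    have heq : (n:ℝ) * (L * (ε₁ * Δt)) = L * ε₁ * ((n:ℝ) * Δt) := by ring
    rw [heq]
    exact (mul_le_mul_of_nonneg_left hnT' (by positivity)).trans_eq hLε
  have hhalf2 : dist (E t u) (E ((n:ℝ) * Δt) u) < ε / 2 := by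
    have hmem1 : (t, u) ∈ Q := ⟨⟨⟨ht.1, by rw [hT'def]; linarith [ht.2]⟩, huK⟩, hZ'subZ'' htu⟩
    have hmem2 : ((n:ℝ) * Δt, u) ∈ Q := ⟨⟨⟨hn0, hnT'⟩, huK⟩, hZ'subZ'' hnu⟩
    have hdist : dist ((t, u) : ℝ × X) (((n:ℝ) * Δt, u)) < δ₂ := by
      rw [Prod.dist_eq, Real.dist_eq, dist_self]
      have : |t - (n:ℝ) * Δt| ≤ δ₂ / 2 := htnθ.trans hθδ₂
      rw [max_eq_left (abs_nonneg _)]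
      linarith
    exact hUC (t, u) hmem1 ((n:ℝ) * Δt, u) hmem2 hdist
  have := dist_triangle (E t u) (E ((n:ℝ) * Δt) u) ((C Δt)^[n] u)
  rw [← dist_eq_norm]
  rw [dist_comm ((C Δt)^[n] u) _] at hhalf1
  linarith
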